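/- Let p = kn + 1 be a prime with k, n ≥ 1, let g be a generator of the cyclic group (ℤ/p)ˣ, and for i ∈ ℤ/n define the Gaussian period of type (k, n): η_i = Σ_{j=0}^{k−1} exp(2πi·g^{jn+i}/p) ∈ ℂ. Then the n × n circulant matrix C = circ(η) over ℂ satisfies |det C|² = p^{n−1}. -/

import Mathlib

open Finset Complex

private lemma circ_det_aux (n : ℕ) [NeZero n] (η : ZMod n → ℂ) :
    (Matrix.circulant η).det
      = ∏ m : ZMod n, ∑ t : ZMod n, η t * ZMod.stdAddChar (-(t * m)) := by
  set ψ : AddChar (ZMod n) ℂ := ZMod.stdAddChar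
  set lam : ZMod n → ℂ := fun m => ∑ t : ZMod n, η t * ψ (-(t * m)) with hlam
  set F : Matrix (ZMod n) (ZMod n) ℂ := Matrix.of (fun i m => ψ (i * m)) with hF
  set G : Matrix (ZMod n) (ZMod n) ℂ := Matrix.of (fun j m => ψ (-(j * m))) with hG
  have key : Matrix.circulant η * F = F * Matrix.diagonal lam := by
    ext i m
    rw [Matrix.mul_diagonal, Matrix.mul_apply]
    simp only [Matrix.circulant_apply, hF, Matrix.of_apply, hlam]
    rw [Finset.mul_sum]
    rw [← Equiv.sum_comp (Equiv.subLeft i) (fun j => η (i - j) * ψ (j * m))]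
    refine Finset.sum_congr rfl fun t _ => ?_
    simp only [Equiv.subLeft_apply, sub_sub_cancel]
    rw [mul_comm (ψ (i * m)), mul_assoc, ← AddChar.map_add_eq_mul]
    ring_nf
  have hFG : F * G = (n : ℂ) • (1 : Matrix (ZMod n) (ZMod n) ℂ) := by
    ext i j
    rw [Matrix.mul_apply]
    simp only [hF, hG, Matrix.of_apply, ← AddChar.map_add_eq_mul]
    have : ∀ m : ZMod n, i * m + -(m * j) = m * (i - j) := by intro m; ring
    simp_rw [this]
    have := AddChar.sum_mulShift (ψ := ψ) (i - j) (ZMod.isPrimitive_stdAddChar n)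
    rw [this]
    simp only [Matrix.smul_apply, Matrix.one_apply, sub_eq_zero, ZMod.card]
    split_ifs with h <;> simp [h]
  have hdetF : F.det ≠ 0 := by
    intro h
    have := congrArg Matrix.det hFG
    rw [Matrix.det_mul, h, zero_mul, Matrix.det_smul, Matrix.det_one] at this
    have h0 : (n : ℂ) ^ (#(univ : Finset (ZMod n))) = 0 := by
      rw [Finset.card_univ]; linear_combination this.symm
    have hn : (n : ℂ) ≠ 0 := Nat.cast_ne_zero.mpr (NeZero.ne n)
    exact pow_ne_zero _ hn h0
  have := congrArg Matrix.det key
  rw [Matrix.det_mul, Matrix.det_mul, Matrix.det_diagonal, mul_comm F.det] at this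
  exact mul_right_cancel₀ hdetF this

private lemma units_sum_aux {p : ℕ} [NeZero p] (hp : Nat.Prime p) (g : (ZMod p)ˣ)
    (hg : ∀ x : (ZMod p)ˣ, x ∈ Subgroup.zpowers g) (f : (ZMod p)ˣ → ℂ) :
    ∑ u : (ZMod p)ˣ, f u = ∑ s ∈ Finset.range (p - 1), f (g ^ s) := by
  haveI := Fact.mk hp
  have hord : orderOf g = p - 1 := by
    rw [orderOf_eq_card_of_forall_mem_zpowers hg, Nat.card_eq_fintype_card, ZMod.card_units]
  let e : Fin (orderOf g) ≃ (ZMod p)ˣ :=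
    (finEquivZPowers (isOfFinOrder_of_finite g)).trans
      (Equiv.subtypeUnivEquiv (fun x => hg x))
  have he : ∀ s : Fin (orderOf g), e s = g ^ (s : ℕ) := fun s => by
    simp only [e, Equiv.trans_apply, finEquivZPowers_apply, Equiv.subtypeUnivEquiv_apply]
  calc ∑ u : (ZMod p)ˣ, f u = ∑ s : Fin (orderOf g), f (e s) := (Equiv.sum_comp e f).symm
    _ = ∑ s : Fin (orderOf g), f (g ^ (s : ℕ)) := by simp_rw [he]
    _ = ∑ s ∈ Finset.range (orderOf g), f (g ^ s) :=
        Fin.sum_univ_eq_sum_range (fun s => f (g ^ s)) (orderOf g)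
    _ = _ := by rw [hord]

private lemma units_compl_sum_aux {p : ℕ} [Fact (Nat.Prime p)] (f : ZMod p → ℂ) :
    ∑ u : (ZMod p)ˣ, f ↑u = ∑ a ∈ ({0}ᶜ : Finset (ZMod p)), f a := by
  have h1 : ∑ u : (ZMod p)ˣ, f ↑u
      = ∑ a : {a : ZMod p // a ≠ 0}, f a.val := by
    rw [← Equiv.sum_comp (unitsEquivNeZero (G₀ := ZMod p)).symm
      (fun u : (ZMod p)ˣ => f ↑u)]
    exact Fintype.sum_congr _ _ fun a => by simp
  rw [h1]
  exact (Finset.sum_subtype _ (by intro x; simp) _).symm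

private lemma gauss_units_aux {p : ℕ} [Fact (Nat.Prime p)] (χ : MulChar (ZMod p) ℂ)
    (ψ : AddChar (ZMod p) ℂ) :
    gaussSum χ ψ = ∑ u : (ZMod p)ˣ, χ u * ψ u := by
  rw [gaussSum, Fintype.sum_eq_add_sum_compl 0]
  rw [χ.map_nonunit (by simp), zero_mul, zero_add]
  rw [units_compl_sum_aux (fun a => χ a * ψ a)]

private lemma conj_std_aux {p : ℕ} [NeZero p] (a : ZMod p) :
    (starRingEnd ℂ) (ZMod.stdAddChar a) = ZMod.stdAddChar (-a) := by
  rw [ZMod.stdAddChar_apply, ZMod.stdAddChar_apply, ← Circle.coe_inv_eq_conj]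
  norm_cast
  exact congrArg (fun z : Circle => (z : ℂ)) (AddChar.map_neg_eq_inv (ZMod.toCircle (N := p)) a).symm

private lemma gauss_abs_sq_aux {p : ℕ} [Fact (Nat.Prime p)] (χ : MulChar (ZMod p) ℂ)
    (hχ : χ ≠ 1) :
    ‖gaussSum χ (ZMod.stdAddChar)‖ ^ 2 = p := by
  set ψ : AddChar (ZMod p) ℂ := ZMod.stdAddChar
  have hconj : (starRingEnd ℂ) (gaussSum χ ψ) = gaussSum χ⁻¹ ψ⁻¹ := by
    rw [gaussSum, gaussSum, map_sum]
    refine Finset.sum_congr rfl fun a _ => ?_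
    rw [map_mul, conj_std_aux, AddChar.inv_apply, ← MulChar.star_apply']
    rfl
  have key : gaussSum χ ψ * (starRingEnd ℂ) (gaussSum χ ψ) = (p : ℂ) := by
    rw [hconj, gaussSum_mul_gaussSum_eq_card hχ (ZMod.isPrimitive_stdAddChar p), ZMod.card]
  have h2 : Complex.normSq (gaussSum χ ψ) = (p : ℝ) := by
    rw [Complex.mul_conj] at key
    exact_mod_cast key
  rw [Complex.sq_norm, h2]

private lemma reindex_sum_aux (k n : ℕ) [NeZero n] (F : ℕ → ℂ) :
    ∑ s ∈ Finset.range (k * n), F s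
      = ∑ t : ZMod n, ∑ j ∈ Finset.range k, F (j * n + t.val) := by
  have hn : 0 < n := Nat.pos_of_ne_zero (NeZero.ne n)
  rw [← Finset.sum_product']
  refine Finset.sum_nbij' (i := fun s => (((s : ZMod n)), s / n))
    (j := fun x => x.2 * n + x.1.val) ?_ ?_ ?_ ?_ ?_
  · intro s hs
    rw [Finset.mem_range] at hs
    simp only [Finset.mem_product, Finset.mem_univ, Finset.mem_range, true_and]
    exact Nat.div_lt_of_lt_mul (by rwa [mul_comm] at hs)
  · intro x hx
    simp only [Finset.mem_product, Finset.mem_univ, Finset.mem_range, true_and] at hx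
    rw [Finset.mem_range]
    calc x.2 * n + x.1.val < x.2 * n + n := by
          exact Nat.add_lt_add_left (ZMod.val_lt x.1) _
      _ = (x.2 + 1) * n := by ring
      _ ≤ k * n := Nat.mul_le_mul_right n hx
  · intro s hs
    rw [Finset.mem_range] at hs
    have h1 : ((s : ZMod n)).val = s % n := ZMod.val_natCast n s
    simp only [h1]
    have h2 := Nat.div_add_mod s n
    rw [Nat.mul_comm] at h2
    omega
  · intro x hx
    simp only [Finset.mem_product, Finset.mem_univ, Finset.mem_range, true_and] at hx
    have h1 : ((x.2 * n + x.1.val : ℕ) : ZMod n) = x.1 := by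
      push_cast
      simp [ZMod.natCast_self, ZMod.natCast_val, ZMod.cast_id]
    have h2 : (x.2 * n + x.1.val) / n = x.2 := by
      rw [Nat.mul_comm, Nat.mul_add_div hn, Nat.div_eq_of_lt (ZMod.val_lt x.1), Nat.add_zero]
    rw [Prod.ext_iff]
    exact ⟨h1, h2⟩
  · intro s hs
    rw [Finset.mem_range] at hs
    simp only
    congr 1
    have h1 : ((s : ZMod n)).val = s % n := ZMod.val_natCast n s
    rw [h1]
    have h2 := Nat.div_add_mod s n
    rw [Nat.mul_comm] at h2
    omega

/-- For a prime `p = kn + 1` with primitive root `g`, the circulant matrix of the Gaussian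
periods `η_i = Σ_{j<k} exp(2πi·g^{jn+i}/p)` of type `(k, n)` has `|det C|² = p^{n−1}`. -/
theorem stmt6 (p k n : ℕ) [NeZero n] (hk : 1 ≤ k) (hpkn : p = k * n + 1)
    (hp : Nat.Prime p) (g : (ZMod p)ˣ) (hg : ∀ x : (ZMod p)ˣ, x ∈ Subgroup.zpowers g)
    (η : ZMod n → ℂ)
    (hη : ∀ i : ZMod n, η i = ∑ j ∈ Finset.range k,
      Complex.exp (2 * Real.pi * Complex.I *
        ((((g : ZMod p) ^ (j * n + i.val)).val : ℂ)) / (p : ℂ))) :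
    ‖(Matrix.circulant η).det‖ ^ 2 = (p : ℝ) ^ (n - 1) := by
  haveI : NeZero p := ⟨hp.pos.ne'⟩
  haveI := Fact.mk hp
  have hn : 0 < n := Nat.pos_of_ne_zero (NeZero.ne n)
  set ψp : AddChar (ZMod p) ℂ := ZMod.stdAddChar with hψp
  set ψn : AddChar (ZMod n) ℂ := ZMod.stdAddChar with hψn
  -- Step 1: rewrite η in terms of the standard additive character mod p
  have hη' : ∀ t : ZMod n, η t
      = ∑ j ∈ Finset.range k, ψp ((g : ZMod p) ^ (j * n + t.val)) := by
    intro t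
    rw [hη t]
    refine Finset.sum_congr rfl fun j _ => ?_
    have hx : ((((g : ZMod p) ^ (j * n + t.val)).val : ℕ) : ZMod p)
        = (g : ZMod p) ^ (j * n + t.val) := ZMod.natCast_zmod_val _
    conv_rhs => rw [← hx]
    rw [hψp, ZMod.stdAddChar_apply, ZMod.toCircle_natCast]
  -- the eigenvalue function
  set lam : ZMod n → ℂ := fun m => ∑ t : ZMod n, η t * ψn (-(t * m)) with hlamdef
  set Fm : ZMod n → ℕ → ℂ :=
    fun m s => ψp ((g : ZMod p) ^ s) * ψn (-((s : ZMod n) * m)) with hFm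
  -- Step 2: eigenvalues as sums over powers of g
  have hlam : ∀ m : ZMod n, lam m = ∑ s ∈ Finset.range (k * n), Fm m s := by
    intro m
    rw [reindex_sum_aux k n (Fm m), hlamdef]
    refine Finset.sum_congr rfl fun t _ => ?_
    rw [hη' t, Finset.sum_mul]
    refine Finset.sum_congr rfl fun j _ => ?_
    simp only [hFm]
    have hcast : ((j * n + t.val : ℕ) : ZMod n) = t := by
      push_cast
      simp [ZMod.natCast_self, ZMod.natCast_val, ZMod.cast_id]
    rw [hcast]
  have hp1 : p - 1 = k * n := by omega
  -- Step 3: the m = 0 eigenvalue is -1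
  have hψpne : ψp ≠ 1 := by
    have h1 := (ZMod.isPrimitive_stdAddChar p) (a := 1) one_ne_zero
    rwa [AddChar.mulShift_one] at h1
  have hlam0 : lam 0 = -1 := by
    rw [hlam 0]
    have hF0 : ∀ s ∈ Finset.range (k * n), Fm 0 s = ψp ((g : ZMod p) ^ s) := by
      intro s _
      simp only [hFm, mul_zero, neg_zero, AddChar.map_zero_eq_one, mul_one]
    rw [Finset.sum_congr rfl hF0]
    have hu := units_sum_aux hp g hg (fun u => ψp ↑u)
    rw [hp1] at hu
    have hval : ∀ s ∈ Finset.range (k * n),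
        ψp (((g ^ s : (ZMod p)ˣ) : ZMod p)) = ψp ((g : ZMod p) ^ s) := by
      intro s _
      rw [Units.val_pow_eq_pow_val]
    rw [Finset.sum_congr rfl hval] at hu
    rw [← hu, units_compl_sum_aux (fun a => ψp a)]
    have hall : ∑ a : ZMod p, ψp a = 0 := AddChar.sum_eq_zero_of_ne_one hψpne
    rw [Fintype.sum_eq_add_sum_compl 0, AddChar.map_zero_eq_one] at hall
    linear_combination hall
  -- Step 4: for m ≠ 0, the eigenvalue is a Gauss sum of a nontrivial character
  have hlam_ne : ∀ m : ZMod n, m ≠ 0 → ‖lam m‖ ^ 2 = (p : ℝ) := by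
    intro m hm
    have hzeta_mul : ψn (-m) * ψn m = 1 := by
      rw [← AddChar.map_add_eq_mul]; simp
    set ζ : ℂˣ := Units.mkOfMulEqOne _ _ hzeta_mul with hζdef
    have hζval : (ζ : ℂ) = ψn (-m) := rfl
    have hcard : Fintype.card (ZMod p)ˣ = k * n := by rw [ZMod.card_units]; omega
    have hζ : ζ ∈ rootsOfUnity (Fintype.card (ZMod p)ˣ) ℂ := by
      rw [_root_.mem_rootsOfUnity]
      apply Units.ext
      rw [Units.val_pow_eq_pow_val, hζval, ← AddChar.map_nsmul_eq_pow, hcard]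
      have hsm : (k * n) • (-m : ZMod n) = 0 := by
        rw [nsmul_eq_mul]
        push_cast
        simp [ZMod.natCast_self]
      rw [hsm, AddChar.map_zero_eq_one, Units.val_one]
    set χ : MulChar (ZMod p) ℂ := MulChar.ofRootOfUnity hζ hg with hχdef
    have hχg : χ ((g : ZMod p)) = ψn (-m) := by
      rw [hχdef, MulChar.ofRootOfUnity_spec]
      exact hζval
    have hχpow : ∀ s : ℕ, χ ((g : ZMod p) ^ s) = ψn (-((s : ZMod n) * m)) := by
      intro s
      rw [map_pow, hχg, ← AddChar.map_nsmul_eq_pow]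
      congr 1
      rw [smul_neg, nsmul_eq_mul]
    have hχne : χ ≠ 1 := by
      intro h
      rw [MulChar.eq_iff hg] at h
      rw [hχg, MulChar.one_apply_coe] at h
      have h0 : ψn (-m) = ψn 0 := by rw [h, AddChar.map_zero_eq_one]
      have := ZMod.injective_stdAddChar (N := n) h0
      exact hm (by simpa [neg_eq_zero] using this)
    have hsum : lam m = gaussSum χ ψp := by
      rw [hlam m, gauss_units_aux, units_sum_aux hp g hg (fun u => χ ↑u * ψp ↑u), hp1]
      refine Finset.sum_congr rfl fun s hs => ?_
      simp only [hFm]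
      rw [Units.val_pow_eq_pow_val, hχpow s]
      ring
    rw [hsum]
    exact gauss_abs_sq_aux χ hχne
  -- Step 5: assemble
  rw [circ_det_aux n η]
  have hprod : ‖∏ m : ZMod n, lam m‖ = ∏ m : ZMod n, ‖lam m‖ :=
    norm_prod _ _
  rw [show (∏ m : ZMod n, ∑ t : ZMod n, η t * ZMod.stdAddChar (-(t * m)))
      = ∏ m : ZMod n, lam m from rfl]
  rw [hprod, ← Finset.prod_pow]
  rw [← Finset.mul_prod_erase univ (fun m => ‖lam m‖ ^ 2) (mem_univ (0 : ZMod n))]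
  have h0 : ‖lam 0‖ ^ 2 = 1 := by rw [hlam0]; simp
  rw [h0, one_mul]
  rw [Finset.prod_congr rfl (fun m hm => hlam_ne m (Finset.ne_of_mem_erase hm))]
  rw [Finset.prod_const, Finset.card_erase_of_mem (mem_univ _), Finset.card_univ, ZMod.card]
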